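/- For any prime p ≥ 5, c(2p + 1, 4p) = (2p² + 1)/(2p), where c(q, m) = 12·s(q, m) + l(q, m). -/

import Mathlib

/-- The length `l(q, m)` of the Hirzebruch–Jung continued fraction
`m/q = e₁ − 1/(e₂ − 1/(⋯ − 1/e_l))` (all `eᵢ ≥ 2`), computed by the
Hirzebruch–Jung algorithm: `e = ⌈m/q⌉` and the next pair is `(q, q⌈m/q⌉ − m)`.
`hjLength m q` is `l(q, m)`. -/
def hjLength : ℕ → ℕ → ℕ
  | _, 0 => 0
  | m, q + 1 => 1 + hjLength (q + 1) ((q + 1) * ((m + q) / (q + 1)) - m)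
termination_by m q => q
decreasing_by
  have h : (m + q) / (q + 1) * (q + 1) ≤ m + q := Nat.div_mul_le_self _ _
  have h2 : (q + 1) * ((m + q) / (q + 1)) = (m + q) / (q + 1) * (q + 1) := Nat.mul_comm _ _
  omega

/-- Evaluation of a Hirzebruch–Jung continued fraction `[e₁, …, e_l]` as the
rational number `e₁ − 1/(e₂ − 1/(⋯ − 1/e_l))`. -/
def hjEval : List ℕ → ℚ
  | [] => 0
  | [e] => (e : ℚ)
  | e :: rest => (e : ℚ) - 1 / hjEval rest


/-- The sawtooth function `((x)) = x − ⌊x⌋ − 1/2` for non-integer `x`, and `0` for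
integer `x`. -/
def sawtooth (x : ℚ) : ℚ := if (⌊x⌋ : ℚ) = x then 0 else x - ⌊x⌋ - 1 / 2

/-- The Dedekind sum `s(q, m) = Σ_{i=1}^{m−1} ((i/m)) ((iq/m))`. -/
def dedekindSum (q m : ℕ) : ℚ :=
  ∑ i ∈ Finset.Ico 1 m, sawtooth ((i : ℚ) / m) * sawtooth ((i * q : ℚ) / m)

/-- `c(q, m) := 12·s(q, m) + l(q, m)`, with `s` the Dedekind sum and `l` the length of
the Hirzebruch–Jung continued fraction of `m/q`. -/
def hjDedekindC (q m : ℕ) : ℚ := 12 * dedekindSum q m + (hjLength m q : ℚ)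

lemma hjLength_zero' (m : ℕ) : hjLength m 0 = 0 := by rw [hjLength]

lemma hjLength_succ' (m q : ℕ) :
    hjLength m (q + 1) = 1 + hjLength (q + 1) ((q + 1) * ((m + q) / (q + 1)) - m) := by
  rw [hjLength]

lemma floor_nat_div' (a m : ℕ) : ⌊(a:ℚ)/(m:ℚ)⌋ = (a / m : ℕ) := by
  have h := Rat.floor_intCast_div_natCast (a:ℤ) m
  push_cast at h
  rw [h]
  exact_mod_cast (Int.natCast_div a m).symm

lemma sawtooth_natCast_div' (a m : ℕ) (hm : 0 < m) (h : a % m ≠ 0) :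
    sawtooth ((a:ℚ)/(m:ℚ)) = ((a % m : ℕ):ℚ)/(m:ℚ) - 1/2 := by
  have hm' : (m:ℚ) ≠ 0 := by exact_mod_cast hm.ne'
  have hfl : ⌊(a:ℚ)/(m:ℚ)⌋ = ((a / m : ℕ) : ℤ) := floor_nat_div' a m
  have key : (a : ℚ) = m * ((a/m : ℕ):ℚ) + ((a % m : ℕ):ℚ) := by
    exact_mod_cast (Nat.div_add_mod a m).symm
  have hne : ((⌊(a:ℚ)/(m:ℚ)⌋ : ℤ) : ℚ) ≠ (a:ℚ)/(m:ℚ) := by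
    rw [hfl]
    intro heq
    apply h
    have h2 : ((a/m : ℕ):ℚ) * m = a := by
      field_simp at heq
      exact_mod_cast heq
    have h3 : (a/m) * m = a := by exact_mod_cast h2
    rw [← h3]
    exact Nat.mul_mod_left _ _
  rw [sawtooth, if_neg hne, hfl, Int.cast_natCast]
  field_simp
  linarith [key]

lemma sum_range_two_mul' (f : ℕ → ℚ) (n : ℕ) :
    ∑ i ∈ Finset.range (2*n), f i = ∑ j ∈ Finset.range n, (f (2*j) + f (2*j+1)) := by
  induction n with
  | zero => simp
  | succ n ih =>
    rw [show 2*(n+1) = (2*n+1)+1 from by ring, Finset.sum_range_succ, Finset.sum_range_succ,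
      ih, Finset.sum_range_succ]
    ring

lemma sum_quad' (n : ℕ) (a b c : ℚ) :
    ∑ j ∈ Finset.range n, (a*(j:ℚ)^2 + b*(j:ℚ) + c)
      = a*((n:ℚ)*(n-1)*(2*n-1)/6) + b*((n:ℚ)*(n-1)/2) + c*n := by
  induction n with
  | zero => simp
  | succ n ih =>
    rw [Finset.sum_range_succ, ih]
    push_cast
    ring

/-- auxiliary explicit form of the summand of the Dedekind sum `s(2p+1, 4p)`. -/
def Gaux (p i : ℕ) : ℚ :=
  (((i % (4*p) : ℕ):ℚ)/((4*p : ℕ):ℚ) - 1/2) *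
    ((((i*(2*p+1)) % (4*p) : ℕ):ℚ)/((4*p:ℕ):ℚ) - 1/2)

lemma dedekind_eval' (p : ℕ) (h5 : 5 ≤ p) :
    dedekindSum (2*p+1) (4*p) = (2*(p:ℚ)^2 - 6*p + 1)/(24*p) := by
  have hp : (0:ℕ) < p := by omega
  have hpQ : (p:ℚ) ≠ 0 := by exact_mod_cast hp.ne'
  have hm : 0 < 4*p := by omega
  have step1 : dedekindSum (2*p+1) (4*p) = ∑ i ∈ Finset.Ico 1 (4*p), Gaux p i := by
    rw [dedekindSum]
    apply Finset.sum_congr rfl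
    intro i hi
    simp only [Finset.mem_Ico] at hi
    have h1 : i % (4*p) ≠ 0 := by rw [Nat.mod_eq_of_lt hi.2]; omega
    have h2 : i*(2*p+1) % (4*p) ≠ 0 := by
      intro h0
      have hd : 4*p ∣ i*(2*p+1) := Nat.dvd_of_mod_eq_zero h0
      have hd2 : 4*p ∣ i*(2*p+1)*(2*p+1) := hd.mul_right _
      rw [show i*(2*p+1)*(2*p+1) = 4*p*(i*(p+1)) + i from by ring] at hd2
      have hd3 : 4*p ∣ i := (Nat.dvd_add_right ⟨i*(p+1), rfl⟩).mp hd2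
      have := Nat.le_of_dvd (by omega) hd3
      omega
    rw [sawtooth_natCast_div' i (4*p) hm h1, ← Nat.cast_mul,
        sawtooth_natCast_div' (i*(2*p+1)) (4*p) hm h2]
    rw [Gaux]
  have hG0 : Gaux p 0 = 1/4 := by
    simp [Gaux]
    norm_num
  have step2 : ∑ i ∈ Finset.range (4*p), Gaux p i
      = 1/4 + ∑ i ∈ Finset.Ico 1 (4*p), Gaux p i := by
    rw [Finset.range_eq_Ico, Finset.sum_eq_sum_Ico_succ_bot hm, hG0]
  have step3 : ∑ i ∈ Finset.range (4*p), Gaux p i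
      = (∑ j ∈ Finset.range (2*p), Gaux p (2*j))
        + ∑ j ∈ Finset.range (2*p), Gaux p (2*j+1) := by
    rw [show 4*p = 2*(2*p) from by ring, sum_range_two_mul', Finset.sum_add_distrib]
  have hA : ∑ j ∈ Finset.range (2*p), Gaux p (2*j)
      = ∑ j ∈ Finset.range (2*p),
          ((1/(4*(p:ℚ)^2))*(j:ℚ)^2 + (-(1/(2*(p:ℚ))))*(j:ℚ) + 1/4) := by
    apply Finset.sum_congr rfl
    intro j hj
    simp only [Finset.mem_range] at hj
    rw [Gaux, show 2*j*(2*p+1) = 2*j + 4*p*j from by ring, Nat.add_mul_mod_self_left,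
        Nat.mod_eq_of_lt (show 2*j < 4*p by omega)]
    push_cast
    field_simp
    ring
  have hsplit : ∑ j ∈ Finset.range (2*p), Gaux p (2*j+1)
      = (∑ j ∈ Finset.range p, Gaux p (2*j+1))
        + ∑ j ∈ Finset.Ico p (2*p), Gaux p (2*j+1) := by
    rw [Finset.range_eq_Ico,
      ← Finset.sum_Ico_consecutive _ (Nat.zero_le p) (show p ≤ 2*p by omega), Finset.range_eq_Ico]
  have hB2' : ∑ j ∈ Finset.Ico p (2*p), Gaux p (2*j+1)
      = ∑ k ∈ Finset.range p, Gaux p (2*(p+k)+1) := by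
    rw [Finset.sum_Ico_eq_sum_range, show 2*p - p = p from by omega]
  have hB1 : ∑ j ∈ Finset.range p, Gaux p (2*j+1)
      = ∑ j ∈ Finset.range p,
          ((4/(16*(p:ℚ)^2))*(j:ℚ)^2 + ((4-4*(p:ℚ))/(16*(p:ℚ)^2))*(j:ℚ)
            + (1-2*(p:ℚ))/(16*(p:ℚ)^2)) := by
    apply Finset.sum_congr rfl
    intro j hj
    simp only [Finset.mem_range] at hj
    rw [Gaux, Nat.mod_eq_of_lt (show 2*j+1 < 4*p by omega),
        show (2*j+1)*(2*p+1) = (2*j+2*p+1) + 4*p*j from by ring, Nat.add_mul_mod_self_left,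
        Nat.mod_eq_of_lt (show 2*j+2*p+1 < 4*p by omega)]
    push_cast
    field_simp
    ring
  have hB2 : ∑ k ∈ Finset.range p, Gaux p (2*(p+k)+1)
      = ∑ k ∈ Finset.range p,
          ((4/(16*(p:ℚ)^2))*(k:ℚ)^2 + ((4-4*(p:ℚ))/(16*(p:ℚ)^2))*(k:ℚ)
            + (1-2*(p:ℚ))/(16*(p:ℚ)^2)) := by
    apply Finset.sum_congr rfl
    intro k hk
    simp only [Finset.mem_range] at hk
    rw [Gaux, Nat.mod_eq_of_lt (show 2*(p+k)+1 < 4*p by omega),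
        show (2*(p+k)+1)*(2*p+1) = (2*k+1) + 4*p*(p+k+1) from by ring,
        Nat.add_mul_mod_self_left, Nat.mod_eq_of_lt (show 2*k+1 < 4*p by omega)]
    push_cast
    field_simp
    ring
  have key : ∑ i ∈ Finset.range (4*p), Gaux p i
      = 1/4 + (2*(p:ℚ)^2 - 6*p + 1)/(24*p) := by
    rw [step3, hA, sum_quad', hsplit, hB1, sum_quad', hB2', hB2, sum_quad']
    push_cast
    field_simp
    ring
  rw [step1]
  linarith [step2, key]

/-- for any prime `p ≥ 5`, `c(2p+1, 4p) = (2p²+1)/(2p)`. -/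
theorem c_twoPAddOne (p : ℕ) (hp : p.Prime) (h5 : 5 ≤ p) :
    hjDedekindC (2 * p + 1) (4 * p) = (2 * (p : ℚ) ^ 2 + 1) / (2 * p) := by
  have hpQ : (p:ℚ) ≠ 0 := by
    have : 0 < p := by omega
    exact_mod_cast this.ne'
  have hl : hjLength (4*p) (2*p+1) = 3 := by
    have e1 : (4*p + 2*p) / (2*p+1) = 2 := by
      rw [Nat.div_eq_of_lt_le] <;> omega
    have e2 : (2*p+1) * ((4*p + 2*p) / (2*p+1)) - 4*p = 2 := by rw [e1]; omega
    rw [hjLength_succ', e2]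
    have e3 : (2*p+1+1) / 2 = p+1 := by
      rw [Nat.div_eq_of_lt_le] <;> omega
    have e4 : (1+1) * ((2*p+1+1) / (1+1)) - (2*p+1) = 1 := by
      norm_num [e3]; omega
    rw [show (2:ℕ) = 1 + 1 from rfl, hjLength_succ', e4]
    rw [show (1:ℕ) = 0 + 1 from rfl, hjLength_succ']
    norm_num [hjLength_zero']
  rw [hjDedekindC, dedekind_eval' p h5, hl]
  push_cast
  field_simp
  ring
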